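/- arXiv:2008.02561 — 3 statements merged into one kernel-verified Lean document; each statement's English description precedes it below -/
import Mathlib

section
/- For x > 0, τ > 0 and δ ∈ [0, π/2), the modified Bessel function of purely imaginary order satisfies |K_{iτ}(x)| ≤ e^{-δτ} K₀(x cos δ), where K_{iτ}(x) = ∫₀^∞ e^{-x cosh t} cos(τ t) dt and K₀(y) = ∫₀^∞ e^{-y cosh t} dt. -/
open MeasureTheory Real

open Set

noncomputable def Fc (x τ : ℝ) (z : ℂ) : ℂ :=
  Complex.exp (-(x:ℂ) * Complex.cosh z + Complex.I * τ * z)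

lemma Fc_hasDerivAt (x τ : ℝ) (z : ℂ) :
    HasDerivAt (Fc x τ) (Fc x τ z * (-(x:ℂ) * Complex.sinh z + Complex.I * τ)) z := by
  have h1 : HasDerivAt (fun w : ℂ => -(x:ℂ) * Complex.cosh w + Complex.I * (τ:ℂ) * w)
      (-(x:ℂ) * Complex.sinh z + Complex.I * (τ:ℂ)) z := by
    have a := (Complex.hasDerivAt_cosh z).const_mul (-(x:ℂ))
    have b := (hasDerivAt_id z).const_mul (Complex.I * (τ:ℂ))
    simpa only [id_eq, mul_one, Pi.add_def] using a.add b
  exact h1.cexp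

lemma cosh_add_I (t s : ℝ) :
    Complex.cosh ((t:ℂ) + (s:ℂ) * Complex.I)
      = (Real.cosh t * Real.cos s : ℝ) + (Real.sinh t * Real.sin s : ℝ) * Complex.I := by
  rw [Complex.cosh_add, Complex.cosh_mul_I, Complex.sinh_mul_I]
  push_cast [← Complex.ofReal_cosh, ← Complex.ofReal_sinh]
  ring

lemma sinh_add_I (t s : ℝ) :
    Complex.sinh ((t:ℂ) + (s:ℂ) * Complex.I)
      = (Real.sinh t * Real.cos s : ℝ) + (Real.cosh t * Real.sin s : ℝ) * Complex.I := by
  rw [Complex.sinh_add, Complex.cosh_mul_I, Complex.sinh_mul_I]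
  push_cast [← Complex.ofReal_cosh, ← Complex.ofReal_sinh]
  ring

lemma abs_Fc (x τ t s : ℝ) :
    ‖Fc x τ ((t:ℂ) + (s:ℂ) * Complex.I)‖
      = Real.exp (-(x * (Real.cosh t * Real.cos s)) - τ * s) := by
  rw [Fc, Complex.norm_exp]
  congr 1
  rw [cosh_add_I]
  simp [Complex.add_re, Complex.mul_re, Complex.mul_im, Complex.cos_ofReal_re,
    Complex.sin_ofReal_im]
  ring

lemma abs_sinh_le (t s : ℝ) :
    ‖Complex.sinh ((t:ℂ) + (s:ℂ) * Complex.I)‖ ≤ 2 * Real.cosh t := by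
  rw [sinh_add_I]
  refine (norm_add_le _ _).trans ?_
  simp only [Complex.norm_real, norm_mul, Complex.norm_I, mul_one, Real.norm_eq_abs]
  have h1 : |Real.sinh t * Real.cos s| ≤ Real.cosh t := by
    rw [abs_mul]
    calc |Real.sinh t| * |Real.cos s| ≤ |Real.sinh t| * 1 :=
          mul_le_mul_of_nonneg_left (Real.abs_cos_le_one s) (abs_nonneg _)
      _ ≤ Real.cosh t := by
          rw [mul_one, Real.abs_sinh, ← Real.cosh_abs]; exact (Real.sinh_lt_cosh _).le
  have h2 : |Real.cosh t * Real.sin s| ≤ Real.cosh t := by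
    rw [abs_mul, abs_of_pos (Real.cosh_pos t)]
    calc Real.cosh t * |Real.sin s| ≤ Real.cosh t * 1 :=
          mul_le_mul_of_nonneg_left (Real.abs_sin_le_one s) (Real.cosh_pos t).le
      _ = Real.cosh t := mul_one _
  rw [abs_mul] at h1 h2
  linarith

lemma self_le_cosh {t : ℝ} (ht : 0 ≤ t) : t ≤ Real.cosh t := by
  rcases eq_or_lt_of_le ht with h | h
  · simpa [← h] using (Real.cosh_pos 0).le
  · exact (Real.self_lt_sinh_iff.2 h).le.trans (Real.sinh_lt_cosh t).le

lemma mul_exp_neg_le {a u : ℝ} (ha : 0 < a) (hu : 0 ≤ u) : u * Real.exp (-(a*u)) ≤ 1/a := by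
  rw [le_div_iff₀ ha]
  have h : a * u ≤ Real.exp (a*u) := (Real.add_one_le_exp (a*u)).trans' (by nlinarith)
  calc u * Real.exp (-(a*u)) * a = (a*u) * Real.exp (-(a*u)) := by ring
    _ ≤ Real.exp (a*u) * Real.exp (-(a*u)) :=
        mul_le_mul_of_nonneg_right h (Real.exp_nonneg _)
    _ = 1 := by rw [← Real.exp_add]; simp

lemma exp_cosh_le {c t : ℝ} (hc : 0 < c) (ht : 0 ≤ t) :
    Real.exp (-(c * Real.cosh t)) ≤ Real.exp (-(c/2 * t)) := by
  apply Real.exp_le_exp.2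
  have := self_le_cosh ht
  nlinarith [Real.cosh_pos t]

lemma bound_aux {c A B t : ℝ} (hc : 0 < c) (hA : 0 ≤ A) (hB : 0 ≤ B) (ht : 0 ≤ t) :
    (A * Real.cosh t + B) * Real.exp (-(c * Real.cosh t))
      ≤ (2*A/c + B) * Real.exp (-(c/2 * t)) := by
  have hch := (Real.cosh_pos t).le
  have h1 : A * Real.cosh t * Real.exp (-(c * Real.cosh t)) ≤ 2*A/c * Real.exp (-(c/2 * t)) := by
    have key : Real.cosh t * Real.exp (-(c/2 * Real.cosh t)) ≤ 2/c := by
      have := mul_exp_neg_le (a := c/2) (u := Real.cosh t) (by linarith) hch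
      calc Real.cosh t * Real.exp (-(c/2 * Real.cosh t)) ≤ 1/(c/2) := this
        _ = 2/c := by field_simp
    have hsplit : Real.exp (-(c * Real.cosh t))
        = Real.exp (-(c/2 * Real.cosh t)) * Real.exp (-(c/2 * Real.cosh t)) := by
      rw [← Real.exp_add]; ring_nf
    rw [hsplit]
    have h2 : Real.exp (-(c/2 * Real.cosh t)) ≤ Real.exp (-(c/2 * t)) := by
      apply Real.exp_le_exp.2
      have := self_le_cosh ht
      nlinarith
    calc A * Real.cosh t * (Real.exp (-(c/2 * Real.cosh t)) * Real.exp (-(c/2 * Real.cosh t)))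
        = A * (Real.cosh t * Real.exp (-(c/2 * Real.cosh t))) * Real.exp (-(c/2 * Real.cosh t)) := by
          ring
      _ ≤ A * (2/c) * Real.exp (-(c/2 * t)) := by
          apply mul_le_mul
          · exact mul_le_mul_of_nonneg_left key hA
          · exact h2
          · positivity
          · positivity
      _ = 2*A/c * Real.exp (-(c/2 * t)) := by ring
  have h3 : B * Real.exp (-(c * Real.cosh t)) ≤ B * Real.exp (-(c/2 * t)) :=
    mul_le_mul_of_nonneg_left (exp_cosh_le hc ht) hB
  nlinarith [Real.exp_nonneg (-(c/2 * t))]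

lemma hasDerivAt_line_s (t s : ℝ) :
    HasDerivAt (fun s : ℝ => (t:ℂ) + (s:ℂ) * Complex.I) Complex.I s := by
  have h : HasDerivAt (fun s : ℝ => (s:ℂ)) 1 s := by
    simpa using (hasDerivAt_id _).ofReal_comp
  simpa using (h.mul_const Complex.I).const_add (t:ℂ)

lemma hasDerivAt_line_t (t s : ℝ) :
    HasDerivAt (fun t : ℝ => (t:ℂ) + (s:ℂ) * Complex.I) 1 t := by
  have h : HasDerivAt (fun t : ℝ => (t:ℂ)) 1 t := by
    simpa using (hasDerivAt_id _).ofReal_comp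
  simpa using h.add_const ((s:ℂ) * Complex.I)

lemma test (x τ t s : ℝ) :
    HasDerivAt (fun s : ℝ => Fc x τ ((t:ℂ) + (s:ℂ) * Complex.I))
      (Complex.I • (Fc x τ ((t:ℂ) + (s:ℂ) * Complex.I) *
        (-(x:ℂ) * Complex.sinh ((t:ℂ) + (s:ℂ) * Complex.I) + Complex.I * τ))) s :=
  (Fc_hasDerivAt x τ _).scomp s (hasDerivAt_line_s t s)

/-- K_{iτ}(x) = ∫₀^∞ e^{-x cosh t} cos(τ t) dt. -/
noncomputable def Kim (τ x : ℝ) : ℝ :=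
  ∫ t in Set.Ioi (0:ℝ), Real.exp (-x * Real.cosh t) * Real.cos (τ * t)

/-- K₀(y) = ∫₀^∞ e^{-y cosh t} dt. -/
noncomputable def K0 (y : ℝ) : ℝ :=
  ∫ t in Set.Ioi (0:ℝ), Real.exp (-y * Real.cosh t)

theorem stmt1 (x τ δ : ℝ) (hx : 0 < x) (hτ : 0 < τ) (hδ : δ ∈ Set.Ico 0 (π/2)) :
    |Kim τ x| ≤ Real.exp (-δ * τ) * K0 (x * Real.cos δ) := by
  obtain ⟨hδ0, hδπ⟩ := hδ
  set r : ℝ := (π/2 - δ)/4 with hrdef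
  have hr0 : 0 < r := by rw [hrdef]; linarith
  set δ' : ℝ := δ + 2*r with hδ'def
  have hδ'lt : δ' < π/2 := by rw [hδ'def, hrdef]; linarith
  have hδ'pos : 0 < δ' := by rw [hδ'def]; linarith
  have hc₀ : 0 < Real.cos δ' := Real.cos_pos_of_mem_Ioo ⟨by linarith, hδ'lt⟩
  set c : ℝ := x * Real.cos δ' with hcdef
  have hc : 0 < c := mul_pos hx hc₀
  have hcos : ∀ s : ℝ, |s| ≤ δ' → Real.cos δ' ≤ Real.cos s := by
    intro s hs
    rw [← Real.cos_abs s]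
    exact Real.cos_le_cos_of_nonneg_of_le_pi (abs_nonneg s)
      (by linarith [Real.pi_gt_three]) hs
  -- continuity of the integrand
  have hcontF : ∀ s : ℝ, Continuous (fun t : ℝ => Fc x τ ((t:ℂ) + (s:ℂ) * Complex.I)) := by
    intro s
    unfold Fc
    fun_prop
  have hcontFd : ∀ s : ℝ, Continuous (fun t : ℝ =>
      Fc x τ ((t:ℂ) + (s:ℂ) * Complex.I) *
        (-(x:ℂ) * Complex.sinh ((t:ℂ) + (s:ℂ) * Complex.I) + Complex.I * τ)) := by
    intro s
    unfold Fc
    fun_prop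
  -- norm bound for Fc
  have hnorm : ∀ s t : ℝ, |s| ≤ δ' → 0 ≤ t →
      ‖Fc x τ ((t:ℂ) + (s:ℂ) * Complex.I)‖
        ≤ Real.exp (τ*δ') * Real.exp (-(c * Real.cosh t)) := by
    intro s t hs ht
    rw [abs_Fc, ← Real.exp_add]
    apply Real.exp_le_exp.2
    obtain ⟨hs1, hs2⟩ := abs_le.1 hs
    have h1 : c * Real.cosh t ≤ x * (Real.cosh t * Real.cos s) := by
      have hco := hcos s hs
      have hch := (Real.cosh_pos t).le
      rw [hcdef]
      nlinarith [mul_le_mul_of_nonneg_left hco (mul_nonneg hx.le hch)]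
    nlinarith
  have hbase : IntegrableOn (fun t : ℝ =>
      Real.exp (τ*δ') * Real.exp (-(c * Real.cosh t))) (Ioi (0:ℝ)) := by
    apply Integrable.const_mul
    refine (exp_neg_integrableOn_Ioi 0 (by linarith : (0:ℝ) < c/2)).mono' ?_ ?_
    · exact (Continuous.aestronglyMeasurable (by fun_prop)).restrict
    · filter_upwards [ae_restrict_mem measurableSet_Ioi] with t ht
      rw [Real.norm_eq_abs, abs_of_pos (Real.exp_pos _)]
      calc Real.exp (-(c * Real.cosh t)) ≤ Real.exp (-(c/2 * t)) :=
            exp_cosh_le hc (le_of_lt ht)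
        _ = Real.exp (-(c/2) * t) := by ring_nf
  have hFint : ∀ s : ℝ, |s| ≤ δ' →
      IntegrableOn (fun t : ℝ => Fc x τ ((t:ℂ) + (s:ℂ) * Complex.I)) (Ioi (0:ℝ)) := by
    intro s hs
    refine hbase.mono' ((hcontF s).aestronglyMeasurable.restrict) ?_
    filter_upwards [ae_restrict_mem measurableSet_Ioi] with t ht
    exact hnorm s t hs (le_of_lt ht)
  -- derivative integrand and its bound
  set Fd : ℝ → ℝ → ℂ := fun s t =>
    Fc x τ ((t:ℂ) + (s:ℂ) * Complex.I) *
      (-(x:ℂ) * Complex.sinh ((t:ℂ) + (s:ℂ) * Complex.I) + Complex.I * τ) with hFddef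
  set bnd : ℝ → ℝ := fun t =>
    Real.exp (τ*δ') * ((2*(2*x)/c + τ) * Real.exp (-(c/2 * t))) with hbnddef
  have hFd_norm : ∀ s t : ℝ, |s| ≤ δ' → 0 ≤ t → ‖Fd s t‖ ≤ bnd t := by
    intro s t hs ht
    rw [hFddef]
    simp only
    rw [norm_mul]
    have h1 : ‖(-(x:ℂ) * Complex.sinh ((t:ℂ) + (s:ℂ) * Complex.I) + Complex.I * τ)‖
        ≤ 2*x * Real.cosh t + τ := by
      refine (norm_add_le _ _).trans ?_
      have e1 : ‖-(x:ℂ) * Complex.sinh ((t:ℂ) + (s:ℂ) * Complex.I)‖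
          ≤ x * (2 * Real.cosh t) := by
        rw [norm_mul, norm_neg, Complex.norm_real, Real.norm_eq_abs, abs_of_pos hx]
        exact mul_le_mul_of_nonneg_left (abs_sinh_le t s) hx.le
      have e2 : ‖Complex.I * (τ:ℂ)‖ = τ := by
        rw [norm_mul, Complex.norm_I, one_mul, Complex.norm_real,
          Real.norm_eq_abs, abs_of_pos hτ]
      nlinarith [e1, e2]
    calc ‖Fc x τ ((t:ℂ) + (s:ℂ) * Complex.I)‖ *
          ‖(-(x:ℂ) * Complex.sinh ((t:ℂ) + (s:ℂ) * Complex.I) + Complex.I * τ)‖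
        ≤ (Real.exp (τ*δ') * Real.exp (-(c * Real.cosh t))) * (2*x * Real.cosh t + τ) := by
          apply mul_le_mul (hnorm s t hs ht) h1 (norm_nonneg _) (by positivity)
      _ = Real.exp (τ*δ') * ((2*x * Real.cosh t + τ) * Real.exp (-(c * Real.cosh t))) := by
          ring
      _ ≤ Real.exp (τ*δ') * ((2*(2*x)/c + τ) * Real.exp (-(c/2 * t))) := by
          apply mul_le_mul_of_nonneg_left
            (bound_aux hc (by linarith) hτ.le ht) (Real.exp_nonneg _)
      _ = bnd t := rfl
  have hbnd_int : IntegrableOn bnd (Ioi (0:ℝ)) := by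
    rw [hbnddef]
    apply Integrable.const_mul
    apply Integrable.const_mul
    refine (exp_neg_integrableOn_Ioi 0 (by linarith : (0:ℝ) < c/2)).congr_fun ?_ measurableSet_Ioi
    intro t _
    ring_nf
  have hFd_int : ∀ s : ℝ, |s| ≤ δ' → IntegrableOn (Fd s) (Ioi (0:ℝ)) := by
    intro s hs
    refine hbnd_int.mono' ((hcontFd s).aestronglyMeasurable.restrict) ?_
    filter_upwards [ae_restrict_mem measurableSet_Ioi] with t ht
    exact hFd_norm s t hs (le_of_lt ht)
  -- the shifted integral
  set J : ℝ → ℂ := fun s => ∫ t in Ioi (0:ℝ), Fc x τ ((t:ℂ) + (s:ℂ) * Complex.I) with hJdef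
  -- s-derivative of the integrand
  have hsderiv : ∀ s t : ℝ, HasDerivAt (fun s : ℝ => Fc x τ ((t:ℂ) + (s:ℂ) * Complex.I))
      (Complex.I • Fd s t) s := fun s t =>
    (Fc_hasDerivAt x τ _).scomp s (hasDerivAt_line_s t s)
  -- t-derivative of the integrand
  have htderiv : ∀ s t : ℝ, HasDerivAt (fun t : ℝ => Fc x τ ((t:ℂ) + (s:ℂ) * Complex.I))
      (Fd s t) t := by
    intro s t
    have h := (Fc_hasDerivAt x τ _).scomp t (hasDerivAt_line_t t s)
    simpa only [one_smul, Function.comp_def] using h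
  -- membership in ball gives |s| ≤ δ'
  have hball : ∀ s₀ ∈ Icc (0:ℝ) δ, ∀ s ∈ Metric.ball s₀ r, |s| ≤ δ' := by
    intro s₀ hs₀ s hs
    rw [Metric.mem_ball, Real.dist_eq] at hs
    obtain ⟨h1, h2⟩ := abs_lt.1 hs
    obtain ⟨h3, h4⟩ := hs₀
    rw [abs_le, hδ'def]
    constructor <;> linarith
  -- derivative of J
  have hJderiv : ∀ s₀ ∈ Icc (0:ℝ) δ,
      HasDerivAt J (∫ t in Ioi (0:ℝ), Complex.I • Fd s₀ t) s₀ := by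
    intro s₀ hs₀
    have habs₀ : |s₀| ≤ δ' := hball s₀ hs₀ s₀ (Metric.mem_ball_self hr0)
    have hb : ∀ᵐ t ∂(volume.restrict (Ioi (0:ℝ))), ∀ s ∈ Metric.ball s₀ r,
        ‖Complex.I • Fd s t‖ ≤ bnd t := by
      filter_upwards [ae_restrict_mem measurableSet_Ioi] with t ht
      intro s hs
      rw [norm_smul]
      simp only [Complex.norm_I, one_mul]
      exact hFd_norm s t (hball s₀ hs₀ s hs) (le_of_lt ht)
    have hd : ∀ᵐ (t : ℝ) ∂(volume.restrict (Ioi (0:ℝ))), ∀ s ∈ Metric.ball s₀ r,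
        HasDerivAt (fun s : ℝ => Fc x τ ((t:ℂ) + (s:ℂ) * Complex.I)) (Complex.I • Fd s t) s := by
      filter_upwards [ae_restrict_mem measurableSet_Ioi] with t _
      intro s _
      exact hsderiv s t
    exact (hasDerivAt_integral_of_dominated_loc_of_deriv_le
      (μ := volume.restrict (Ioi (0:ℝ)))
      (F := fun (s : ℝ) (t : ℝ) => Fc x τ ((t:ℂ) + (s:ℂ) * Complex.I))
      (F' := fun (s : ℝ) (t : ℝ) => Complex.I • Fd s t) (x₀ := s₀) (bound := bnd) (Metric.ball_mem_nhds s₀ hr0)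
      (Filter.Eventually.of_forall fun s => (hcontF s).aestronglyMeasurable.restrict)
      (hFint s₀ habs₀)
      (((hcontFd s₀).const_smul Complex.I).aestronglyMeasurable.restrict)
      hb hbnd_int hd).2
  -- value of the derivative integral
  have hvalue : ∀ s₀ : ℝ, |s₀| ≤ δ' →
      (∫ t in Ioi (0:ℝ), Fd s₀ t) = -Fc x τ ((0:ℝ) + (s₀:ℂ) * Complex.I) := by
    intro s₀ hs₀
    have htend : Filter.Tendsto (fun t : ℝ => Fc x τ ((t:ℂ) + (s₀:ℂ) * Complex.I))
        Filter.atTop (nhds 0) := by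
      apply squeeze_zero_norm'
        (a := fun t => Real.exp (τ*δ') * Real.exp (-(c/2) * t))
      · filter_upwards [Filter.eventually_ge_atTop (0:ℝ)] with t ht
        calc ‖Fc x τ ((t:ℂ) + (s₀:ℂ) * Complex.I)‖
            ≤ Real.exp (τ*δ') * Real.exp (-(c * Real.cosh t)) := hnorm s₀ t hs₀ ht
          _ ≤ Real.exp (τ*δ') * Real.exp (-(c/2) * t) := by
              apply mul_le_mul_of_nonneg_left _ (Real.exp_nonneg _)
              calc Real.exp (-(c * Real.cosh t)) ≤ Real.exp (-(c/2 * t)) :=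
                    exp_cosh_le hc ht
                _ = Real.exp (-(c/2) * t) := by ring_nf
      · have h1 : Filter.Tendsto (fun t : ℝ => Real.exp (-(c/2) * t))
            Filter.atTop (nhds 0) := by
          apply Real.tendsto_exp_atBot.comp
          exact Filter.Tendsto.const_mul_atTop_of_neg (by linarith) Filter.tendsto_id
        simpa using h1.const_mul (Real.exp (τ*δ'))
    have := integral_Ioi_of_hasDerivAt_of_tendsto
      (f := fun t : ℝ => Fc x τ ((t:ℂ) + (s₀:ℂ) * Complex.I))
      (f' := Fd s₀) (a := 0)
      ((hcontF s₀).continuousWithinAt)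
      (fun t _ => htderiv s₀ t) (hFd_int s₀ hs₀) htend
    rw [this]
    simp
  -- real part of J is constant on [0, δ]
  set G : ℝ → ℝ := fun s => (J s).re with hGdef
  have hGderiv : ∀ s₀ ∈ Icc (0:ℝ) δ, HasDerivAt G 0 s₀ := by
    intro s₀ hs₀
    have habs₀ : |s₀| ≤ δ' := hball s₀ hs₀ s₀ (Metric.mem_ball_self hr0)
    have hJ := hJderiv s₀ hs₀
    have hIv : (∫ t in Ioi (0:ℝ), Complex.I • Fd s₀ t)
        = Complex.I • (-Fc x τ ((0:ℝ) + (s₀:ℂ) * Complex.I)) := by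
      rw [integral_smul, hvalue s₀ habs₀]
    rw [hIv] at hJ
    have hre := Complex.reCLM.hasFDerivAt.comp_hasDerivAt s₀ hJ
    have hFcreal : Fc x τ ((0:ℝ) + (s₀:ℂ) * Complex.I)
        = ((Real.exp (-(x * Real.cos s₀) - τ * s₀) : ℝ) : ℂ) := by
      rw [Fc, Complex.ofReal_exp]
      congr 1
      have h0 : ((0:ℝ):ℂ) + (s₀:ℂ) * Complex.I = (s₀:ℂ) * Complex.I := by simp
      rw [h0, Complex.cosh_mul_I, ← Complex.ofReal_cos]
      have hI : Complex.I * (τ:ℂ) * ((s₀:ℂ) * Complex.I)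
          = -((τ:ℂ) * (s₀:ℂ)) := by
        have := Complex.I_mul_I
        ring_nf
        rw [Complex.I_sq]
        ring
      rw [hI]
      push_cast
      ring
    have hzero : Complex.reCLM (Complex.I • (-Fc x τ ((0:ℝ) + (s₀:ℂ) * Complex.I))) = 0 := by
      rw [hFcreal]
      simp only [Complex.reCLM_apply, smul_eq_mul, Complex.mul_re, Complex.I_re, Complex.I_im,
        Complex.neg_re, Complex.neg_im, Complex.ofReal_re, Complex.ofReal_im]
      ring
    rw [hzero] at hre
    exact hre
  have hconst : G δ = G 0 := by
    have := constant_of_has_deriv_right_zero (f := G) (a := 0) (b := δ)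
      (fun s hs => ((hGderiv s hs).continuousAt).continuousWithinAt)
      (fun s hs => ((hGderiv s (Ico_subset_Icc_self hs)).hasDerivWithinAt))
    exact this δ (right_mem_Icc.2 hδ0)
  -- identify Kim with G 0
  have hδabs : |δ| ≤ δ' := by rw [abs_of_nonneg hδ0, hδ'def]; linarith
  have h0abs : |(0:ℝ)| ≤ δ' := by simp [hδ'pos.le]
  have hKim : Kim τ x = G 0 := by
    rw [hGdef]
    simp only
    rw [hJdef]
    simp only
    have := (ContinuousLinearMap.integral_comp_comm Complex.reCLM (hFint 0 h0abs)).symm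
    rw [Kim]
    simp only [Complex.reCLM_apply] at this ⊢
    rw [this]
    apply setIntegral_congr_fun measurableSet_Ioi
    intro t _
    show Real.exp (-x * Real.cosh t) * Real.cos (τ * t)
      = (Fc x τ ((t:ℂ) + ((0:ℝ):ℂ) * Complex.I)).re
    rw [Fc]
    have h1 : ((t:ℂ) + ((0:ℝ):ℂ) * Complex.I) = (t:ℂ) := by simp
    rw [h1, ← Complex.ofReal_cosh, Complex.exp_re]
    congr 1
    · congr 1
      simp [Complex.add_re, Complex.mul_re]
    · congr 1
      simp [Complex.add_im, Complex.mul_im]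
  -- final estimate
  have hfinal : |G δ| ≤ Real.exp (-δ * τ) * K0 (x * Real.cos δ) := by
    have h1 : |G δ| ≤ ‖J δ‖ := by
      rw [hGdef]
      simpa using Complex.abs_re_le_norm (J δ)
    have h2 : ‖J δ‖ ≤ ∫ t in Ioi (0:ℝ), ‖Fc x τ ((t:ℂ) + (δ:ℂ) * Complex.I)‖ :=
      norm_integral_le_integral_norm _
    have h3 : (∫ t in Ioi (0:ℝ), ‖Fc x τ ((t:ℂ) + (δ:ℂ) * Complex.I)‖)
        = Real.exp (-δ * τ) * K0 (x * Real.cos δ) := by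
      rw [K0, ← integral_const_mul]
      apply setIntegral_congr_fun measurableSet_Ioi
      intro t _
      show ‖Fc x τ ((t:ℂ) + (δ:ℂ) * Complex.I)‖
        = Real.exp (-δ * τ) * Real.exp (-(x * Real.cos δ) * Real.cosh t)
      rw [abs_Fc, ← Real.exp_add]
      congr 1
      ring
    calc |G δ| ≤ ‖J δ‖ := h1
      _ ≤ _ := h2
      _ = _ := h3
  rw [hKim, ← hconst]
  exact hfinal
end

section
/- Let ψ : ℝ → ℂ be a 2π-periodic function satisfying the Lipschitz condition |ψ(u) − ψ(v)| ≤ C|u − v| for all u, v. Then for every t ∈ [−π, π], the limit as N → ∞ of (1/(2π)) ∫_{−π}^{π} [ψ(u+t) − ψ(−u−t) − ψ(t) + ψ(−t)] · sin((2N+1)u/2)/sin(u/2) du equals 0. -/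
open MeasureTheory Real Filter

open scoped FourierTransform

private lemma sin_exp_form' (z : ℂ) : Complex.sin z =
    (Complex.exp (z * Complex.I) - Complex.exp (-z * Complex.I)) / (2 * Complex.I) := by
  rw [Complex.sin]
  field_simp
  linear_combination (Complex.exp (-(z * Complex.I)) - Complex.exp (z * Complex.I)) * Complex.I_sq

private lemma helper_div' (z s E1 E2 : ℂ) (hs : s ≠ 0) :
    z * ((E1 - E2) / (2 * Complex.I) / s) = (E1 * (z / s) - E2 * (z / s)) / (2 * Complex.I) := by
  have hI := Complex.I_ne_zero
  field_simp

private lemma abs_le_pi_mul_abs_sin_half' {u : ℝ} (h : |u| ≤ π) : |u| ≤ π * |Real.sin (u / 2)| := by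
  have hπ := Real.pi_pos
  rcases le_or_gt 0 u with hu | hu
  · rw [abs_of_nonneg hu] at h ⊢
    have h1 := Real.mul_le_sin (x := u / 2) (by linarith) (by linarith)
    have h2 : 0 ≤ Real.sin (u / 2) :=
      Real.sin_nonneg_of_nonneg_of_le_pi (by linarith) (by linarith)
    rw [abs_of_nonneg h2]
    rw [div_mul_eq_mul_div, div_le_iff₀ hπ] at h1
    nlinarith
  · rw [abs_of_neg hu] at h ⊢
    have h1 := Real.mul_le_sin (x := -u / 2) (by linarith) (by linarith)
    have h2 : Real.sin (u / 2) ≤ 0 :=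
      Real.sin_nonpos_of_nonpos_of_neg_pi_le (by linarith) (by linarith)
    rw [abs_of_nonpos h2]
    rw [div_mul_eq_mul_div, div_le_iff₀ hπ, neg_div, Real.sin_neg] at h1
    nlinarith

private lemma key_pointwise' (z : ℂ) (u ω : ℝ) :
    z * ((Real.sin (ω * u) / Real.sin (u / 2) : ℝ) : ℂ) =
      (Complex.exp (((u * ω : ℝ) : ℂ) * Complex.I) * (z / ((Real.sin (u / 2) : ℝ) : ℂ)) -
        Complex.exp (((-(u * ω) : ℝ) : ℂ) * Complex.I) * (z / ((Real.sin (u / 2) : ℝ) : ℂ))) /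
        (2 * Complex.I) := by
  by_cases hs : Real.sin (u / 2) = 0
  · simp [hs]
  · have hsC : ((Real.sin (u / 2) : ℝ) : ℂ) ≠ 0 := by exact_mod_cast hs
    rw [mul_comm ω u, Complex.ofReal_div, Complex.ofReal_sin, sin_exp_form',
      Complex.ofReal_neg, helper_div' _ _ _ _ hsC]

theorem stmt2 (ψ : ℝ → ℂ) (C : ℝ)
    (hper : ∀ u, ψ (u + 2 * π) = ψ u)
    (hlip : ∀ u v, ‖ψ u - ψ v‖ ≤ C * |u - v|)
    (t : ℝ) (ht : t ∈ Set.Icc (-π) π) :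
    Tendsto (fun N : ℕ =>
        (1 / (2 * π) : ℂ) * ∫ u in (-π)..π,
          (ψ (u + t) - ψ (-u - t) - ψ t + ψ (-t)) *
            ((Real.sin ((2 * N + 1) * u / 2) / Real.sin (u / 2) : ℝ) : ℂ))
      atTop (nhds 0) := by
  have hπ := Real.pi_pos
  have hC : 0 ≤ C := by
    have h := hlip 0 1
    have h0 : (0 : ℝ) ≤ ‖ψ 0 - ψ 1‖ := norm_nonneg _
    simp at h
    linarith
  have hψ : Continuous ψ := by
    refine (LipschitzWith.of_dist_le_mul (K := C.toNNReal) fun u v => ?_).continuous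
    simpa [Complex.dist_eq, Real.dist_eq, Real.coe_toNNReal C hC] using hlip u v
  set f : ℝ → ℂ := fun u => ψ (u + t) - ψ (-u - t) - ψ t + ψ (-t) with hf
  set g : ℝ → ℂ := fun u => f u / ((Real.sin (u / 2) : ℝ) : ℂ) with hg
  have hfc : Continuous f := by
    apply Continuous.add
    apply Continuous.sub
    apply Continuous.sub
    · exact hψ.comp (continuous_id.add continuous_const)
    · exact hψ.comp (continuous_id.neg.sub continuous_const)
    · exact continuous_const
    · exact continuous_const
  have hgm : Measurable g :=
    hfc.measurable.div (Complex.measurable_ofReal.comp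
      (Real.measurable_sin.comp (measurable_id.div_const 2)))
  have hfb : ∀ u, ‖f u‖ ≤ 2 * C * |u| := by
    intro u
    have h1 := hlip (u + t) t
    have h2 := hlip (-t) (-u - t)
    have heq : f u = (ψ (u + t) - ψ t) + (ψ (-t) - ψ (-u - t)) := by rw [hf]; ring
    calc ‖f u‖
        ≤ ‖ψ (u + t) - ψ t‖ + ‖ψ (-t) - ψ (-u - t)‖ := by
          rw [heq]; exact norm_add_le _ _
      _ ≤ C * |u + t - t| + C * |(-t) - (-u - t)| := add_le_add h1 h2
      _ = 2 * C * |u| := by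
          rw [show u + t - t = u by ring, show (-t) - (-u - t) = u by ring]; ring
  have hgb : ∀ u ∈ Set.Ioc (-π) π, ‖g u‖ ≤ 2 * C * π := by
    intro u hu
    have habs : |u| ≤ π := abs_le.2 ⟨le_of_lt hu.1, hu.2⟩
    by_cases hs : Real.sin (u / 2) = 0
    · rw [hg]
      simp only [hs, Complex.ofReal_zero, div_zero, norm_zero]
      positivity
    · have hkey := abs_le_pi_mul_abs_sin_half' habs
      have hs' : (0 : ℝ) < |Real.sin (u / 2)| := abs_pos.2 hs
      rw [hg, norm_div, Complex.norm_real, Real.norm_eq_abs, div_le_iff₀ hs']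
      calc ‖f u‖ ≤ 2 * C * |u| := hfb u
        _ ≤ 2 * C * π * |Real.sin (u / 2)| := by nlinarith
  have hgint : IntegrableOn g (Set.Ioc (-π) π) := by
    refine Integrable.mono' (g := fun _ : ℝ => 2 * C * π)
      (integrableOn_const measure_Ioc_lt_top.ne)
      hgm.aestronglyMeasurable.restrict ?_
    exact (ae_restrict_iff' measurableSet_Ioc).2 (ae_of_all _ hgb)
  set F : ℝ → ℂ := (Set.Ioc (-π) π).indicator g with hF
  set Φ : ℝ → ℂ := fun w : ℝ => ∫ v : ℝ, 𝐞 (-(v * w)) • F v with hΦ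
  have hRL : Tendsto Φ (cocompact ℝ) (nhds 0) :=
    Real.tendsto_integral_exp_smul_cocompact F
  have hΦeq : ∀ w : ℝ, Φ w =
      ∫ v in Set.Ioc (-π) π, Complex.exp (((2 * π * -(v * w) : ℝ) : ℂ) * Complex.I) * g v := by
    intro w
    rw [hΦ]
    simp only
    rw [← integral_indicator measurableSet_Ioc]
    congr 1
    funext v
    by_cases hv : v ∈ Set.Ioc (-π) π
    · rw [Set.indicator_of_mem hv, hF, Set.indicator_of_mem hv, Circle.smul_def,
        Real.fourierChar_apply, smul_eq_mul]
    · rw [Set.indicator_of_notMem hv, hF, Set.indicator_of_notMem hv, smul_zero]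
  -- frequencies
  set ω : ℕ → ℝ := fun N => (2 * (N : ℝ) + 1) / 2 with hωdef
  set w1 : ℕ → ℝ := fun N => ω N / (2 * π) with hw1
  set w2 : ℕ → ℝ := fun N => -(ω N / (2 * π)) with hw2
  have hintw : ∀ w : ℝ, IntegrableOn
      (fun v => Complex.exp (((2 * π * -(v * w) : ℝ) : ℂ) * Complex.I) * g v)
      (Set.Ioc (-π) π) := by
    intro w
    apply Integrable.bdd_mul hgint
    · apply Continuous.aestronglyMeasurable
      exact Complex.continuous_exp.comp
        ((Complex.continuous_ofReal.comp (by fun_prop)).mul continuous_const)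
    · refine ae_of_all _ fun x => (?_ : _ ≤ (1 : ℝ))
      rw [Complex.norm_exp_ofReal_mul_I]
  have hmain : ∀ N : ℕ,
      (1 / (2 * π) : ℂ) * ∫ u in (-π)..π,
          (ψ (u + t) - ψ (-u - t) - ψ t + ψ (-t)) *
            ((Real.sin ((2 * N + 1) * u / 2) / Real.sin (u / 2) : ℝ) : ℂ)
        = (1 / (2 * π) : ℂ) * ((Φ (w2 N) - Φ (w1 N)) / (2 * Complex.I)) := by
    intro N
    congr 1
    rw [intervalIntegral.integral_of_le (by linarith), hΦeq, hΦeq,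
      ← integral_sub (hintw (w2 N)) (hintw (w1 N)), ← integral_div]
    refine setIntegral_congr_fun measurableSet_Ioc fun u hu => ?_
    have harg2 : 2 * π * -(u * w2 N) = u * ω N := by
      rw [hw2]; field_simp
    have harg1 : 2 * π * -(u * w1 N) = -(u * ω N) := by
      rw [hw1]; field_simp
    rw [harg2, harg1]
    have hsin : (2 * (N : ℝ) + 1) * u / 2 = ω N * u := by
      rw [hωdef]; ring
    rw [hsin]
    exact key_pointwise' (f u) u (ω N)
  have hω1 : Tendsto ω atTop atTop := by
    rw [hωdef]
    apply Tendsto.atTop_div_const two_pos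
    apply tendsto_atTop_add_const_right
    exact (tendsto_natCast_atTop_atTop (R := ℝ)).const_mul_atTop two_pos
  have h1 : Tendsto w1 atTop atTop := hω1.atTop_div_const (by positivity)
  have h2 : Tendsto w2 atTop atBot := tendsto_neg_atBot_iff.mpr h1
  have hc1 : Tendsto w1 atTop (cocompact ℝ) := by
    rw [cocompact_eq_atBot_atTop]; exact h1.mono_right le_sup_right
  have hc2 : Tendsto w2 atTop (cocompact ℝ) := by
    rw [cocompact_eq_atBot_atTop]; exact h2.mono_right le_sup_left
  have hfin := (((hRL.comp hc2).sub (hRL.comp hc1)).div_const (2 * Complex.I)).const_mul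
    ((1 : ℂ) / (2 * π))
  simp only [sub_zero, sub_self, zero_div, mul_zero] at hfin
  exact Tendsto.congr (fun N => (hmain N).symm) hfin
end

section
/- For b > 0 and s with 0 < Re(s), the integral ∫₀^∞ y^{s−1} K₀(by) dy converges and equals 2^{s−2} b^{−s} Γ(s/2)², where K₀ is the modified Bessel function of the second kind of order zero. -/
open MeasureTheory Real Complex
open Set intervalIntegral

lemma re_half {s : ℂ} (hs : 0 < s.re) : 0 < (s/2).re := by
  rw [show (s/2) = s * (1/2 : ℝ) by push_cast; ring, Complex.mul_re]
  simp
  linarith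

lemma beta_half {s : ℂ} (hs : 0 < s.re) :
    ∫ x in Ioo (0:ℝ) (1/2), ((x:ℂ) ^ (s/2 - 1) * (1 - (x:ℂ)) ^ (s/2 - 1)) =
      Complex.betaIntegral (s/2) (s/2) / 2 := by
  have hs2 : 0 < (s/2).re := re_half hs
  set f : ℝ → ℂ := fun x => (x:ℂ) ^ (s/2 - 1) * (1 - (x:ℂ)) ^ (s/2 - 1) with hf
  have hI : IntervalIntegrable f volume 0 1 := Complex.betaIntegral_convergent hs2 hs2
  have hsub1 : Set.uIcc (0:ℝ) (1/2) ⊆ Set.uIcc (0:ℝ) 1 := by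
    rw [Set.uIcc_of_le (by norm_num : (0:ℝ) ≤ 1/2), Set.uIcc_of_le zero_le_one]
    exact Set.Icc_subset_Icc le_rfl (by norm_num)
  have hsub2 : Set.uIcc (1/2:ℝ) 1 ⊆ Set.uIcc (0:ℝ) 1 := by
    rw [Set.uIcc_of_le (by norm_num : (1/2:ℝ) ≤ 1), Set.uIcc_of_le zero_le_one]
    exact Set.Icc_subset_Icc (by norm_num) le_rfl
  have hI1 : IntervalIntegrable f volume 0 (1/2) := hI.mono_set hsub1
  have hI2 : IntervalIntegrable f volume (1/2) 1 := hI.mono_set hsub2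
  have hsym : ∫ x in (1/2:ℝ)..1, f x = ∫ x in (0:ℝ)..(1/2), f x := by
    have := intervalIntegral.integral_comp_sub_left (a := (0:ℝ)) (b := 1/2) f 1
    rw [show (1:ℝ)-(1/2) = 1/2 by norm_num, sub_zero] at this
    rw [← this]
    refine intervalIntegral.integral_congr fun x hx => ?_
    simp only [hf]
    push_cast
    ring_nf
  have hsplit : Complex.betaIntegral (s/2) (s/2) = 2 * ∫ x in (0:ℝ)..(1/2), f x := by
    rw [Complex.betaIntegral, ← intervalIntegral.integral_add_adjacent_intervals hI1 hI2]
    rw [hsym]; ring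
  rw [← MeasureTheory.integral_Ioc_eq_integral_Ioo,
    ← intervalIntegral.integral_of_le (by norm_num : (0:ℝ) ≤ 1/2), hsplit]
  ring


noncomputable def phi (t : ℝ) : ℝ := (Real.exp (2*t) + 1)⁻¹
noncomputable def phi' (t : ℝ) : ℝ := -(2*Real.exp (2*t)) / (Real.exp (2*t) + 1)^2

lemma phi_deriv (t : ℝ) : HasDerivAt phi (phi' t) t := by
  have h1 : HasDerivAt (fun t : ℝ => Real.exp (2*t) + 1) (2*Real.exp (2*t)) t := by
    have := ((hasDerivAt_id t).const_mul (2:ℝ)).exp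
    simpa [mul_comm] using this.add_const 1
  have := h1.inv (by positivity)
  exact this

lemma phi_inj : Set.InjOn phi (Ioi (0:ℝ)) := by
  intro t1 _ t2 _ h
  have := inv_injective h
  have := Real.exp_injective (by linarith : Real.exp (2*t1) = Real.exp (2*t2))
  linarith

lemma phi_img : phi '' (Ioi (0:ℝ)) = Ioo (0:ℝ) (1/2) := by
  ext x
  constructor
  · rintro ⟨t, ht, rfl⟩
    have hE : 1 < Real.exp (2*t) := by
      rw [show (1:ℝ) = Real.exp 0 by simp]
      exact Real.exp_lt_exp.mpr (by linarith [Set.mem_Ioi.mp ht])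
    constructor
    · rw [phi]; positivity
    · rw [phi, show (1:ℝ)/2 = 2⁻¹ by norm_num]
      exact inv_strictAnti₀ (by norm_num) (by linarith)
  · rintro ⟨hx0, hx2⟩
    have h2 : 2 < x⁻¹ := by
      rw [show (2:ℝ) = (2⁻¹)⁻¹ by norm_num]
      exact inv_strictAnti₀ hx0 (by linarith)
    refine ⟨Real.log (x⁻¹ - 1) / 2, ?_, ?_⟩
    · have : 0 < Real.log (x⁻¹ - 1) := Real.log_pos (by linarith)
      exact Set.mem_Ioi.mpr (by linarith)
    · rw [phi, mul_div_cancel₀ _ (two_ne_zero), Real.exp_log (by linarith)]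
      field_simp
      ring



lemma phi_point (s : ℂ) (t : ℝ) :
    |phi' t| • (((phi t : ℝ):ℂ) ^ (s/2-1) * (1 - ((phi t : ℝ):ℂ)) ^ (s/2-1)) =
      (2:ℂ)^(1-s) * ((Real.cosh t : ℝ):ℂ) ^ (-s) := by
  set E := Real.exp (2*t) with hE
  set c := Real.cosh t with hc
  set r := (2*c)⁻¹ with hr
  have hcpos : 0 < c := Real.cosh_pos t
  have hrpos : 0 < r := by positivity
  have hEpos : 0 < E := Real.exp_pos _
  have hexpE : E = Real.exp t * Real.exp t := by rw [hE, two_mul, Real.exp_add]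
  have hcosh : c = (Real.exp t + (Real.exp t)⁻¹)/2 := by rw [hc, Real.cosh_eq, Real.exp_neg]
  have hphi : phi t = (E+1)⁻¹ := rfl
  have hphi2 : 1 - phi t = E/(E+1) := by
    rw [hphi]; field_simp; ring
  have hprod : phi t * (1 - phi t) = r^2 := by
    rw [hphi2, hphi, hr, hcosh, hexpE]
    have h := Real.exp_pos t
    field_simp
  have habs : |phi' t| = 2 * r^2 := by
    have : |phi' t| = 2*E/(E+1)^2 := by
      rw [phi']
      rw [abs_div, abs_neg, _root_.abs_of_nonneg (by positivity : (0:ℝ) ≤ 2*Real.exp (2*t)),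
        _root_.abs_of_nonneg (by positivity : (0:ℝ) ≤ (Real.exp (2*t)+1)^2)]
    rw [this, ← hprod, hphi2, hphi]
    field_simp
  have hphi_nonneg : (0:ℝ) ≤ phi t := by rw [hphi]; positivity
  have hphi2_nonneg : (0:ℝ) ≤ 1 - phi t := by rw [hphi2]; positivity
  have hcast : (1 - ((phi t : ℝ):ℂ)) = ((1 - phi t : ℝ) : ℂ) := by push_cast; ring
  rw [hcast, ← mul_cpow_ofReal_nonneg hphi_nonneg hphi2_nonneg, ← Complex.ofReal_mul, hprod]
  have h2 : ((r^2 : ℝ):ℂ) = ((r ^ (2:ℝ) : ℝ):ℂ) := by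
    congr 1
    rw [← Real.rpow_natCast r 2]
    norm_num
  rw [h2, ← Complex.cpow_mul_ofReal_nonneg hrpos.le 2 (s/2-1)]
  have h3 : ((2:ℝ):ℂ) * (s/2-1) = s - 2 := by push_cast; ring
  rw [h3]
  rw [real_smul, habs]
  have hrne : (r:ℂ) ≠ 0 := Complex.ofReal_ne_zero.mpr hrpos.ne'
  have h4 : ((2 * r^2 : ℝ):ℂ) = 2 * (r:ℂ)^(2:ℂ) := by
    push_cast
    rw [Complex.cpow_ofNat]
  rw [h4, mul_assoc, ← Complex.cpow_add _ _ hrne]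
  have h5 : (2:ℂ) + (s - 2) = s := by ring
  rw [h5]
  have h6 : (r:ℂ)^s = (2:ℂ)^(-s) * ((c:ℝ):ℂ)^(-s) := by
    rw [hr, Complex.ofReal_inv,
      Complex.inv_cpow _ _ (by
        rw [Complex.arg_ofReal_of_nonneg (by positivity)]
        exact Real.pi_ne_zero.symm),
      Complex.ofReal_mul,
      Complex.mul_cpow_ofReal_nonneg (by norm_num) hcpos.le, mul_inv,
      ← Complex.cpow_neg, ← Complex.cpow_neg, Complex.ofReal_ofNat]
  rw [h6]
  have h7 : (2:ℂ)^(1-s) = 2 * (2:ℂ)^(-s) := by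
    rw [show (1:ℂ) - s = 1 + (-s) by ring, Complex.cpow_add _ _ (two_ne_zero), Complex.cpow_one]
  rw [h7]
  ring



lemma cosh_int {s : ℂ} (hs : 0 < s.re) :
    ∫ t in Ioi (0:ℝ), ((Real.cosh t:ℝ):ℂ)^(-s) =
      (2:ℂ)^(s-2) * Complex.betaIntegral (s/2) (s/2) := by
  have key := MeasureTheory.integral_image_eq_integral_abs_deriv_smul measurableSet_Ioi
    (fun t _ => (phi_deriv t).hasDerivWithinAt) phi_inj
    (fun x : ℝ => (x:ℂ)^(s/2-1) * (1-(x:ℂ))^(s/2-1))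
  rw [phi_img, beta_half hs] at key
  have step1 : ∫ t in Ioi (0:ℝ), ((Real.cosh t:ℝ):ℂ)^(-s) =
      ∫ t in Ioi (0:ℝ), (2:ℂ)^(s-1) *
        (|phi' t| • (((phi t : ℝ):ℂ) ^ (s/2-1) * (1 - ((phi t : ℝ):ℂ)) ^ (s/2-1))) := by
    refine MeasureTheory.setIntegral_congr_fun measurableSet_Ioi fun t _ => ?_
    rw [phi_point s t, ← mul_assoc, ← Complex.cpow_add _ _ (two_ne_zero),
      show s - 1 + (1 - s) = 0 by ring, Complex.cpow_zero, one_mul]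
  rw [step1, MeasureTheory.integral_const_mul, ← key,
    show (2:ℂ)^(s-1) = (2:ℂ)^(s-2) * 2 by
      rw [show s - 1 = (s-2)+1 by ring, Complex.cpow_add _ _ (two_ne_zero),
        Complex.cpow_one]]
  ring



theorem stmt8 (b : ℝ) (hb : 0 < b) (s : ℂ) (hs : 0 < s.re) :
    IntegrableOn (fun y : ℝ => (y : ℂ) ^ (s - 1) * (K0 (b * y) : ℂ)) (Set.Ioi 0) ∧
      ∫ y in Set.Ioi (0:ℝ), (y : ℂ) ^ (s - 1) * (K0 (b * y) : ℂ) =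
        2 ^ (s - 2) * (b : ℂ) ^ (-s) * Complex.Gamma (s / 2) ^ 2 := by
  set σ := s.re with hσ
  set μ := volume.restrict (Ioi (0:ℝ)) with hμ
  set F : ℝ → ℝ → ℂ := fun t y =>
    (y:ℂ)^(s-1) * Complex.exp (-(((b*Real.cosh t : ℝ):ℂ) * (y:ℂ))) with hF
  -- positivity of rates
  have hr : ∀ t : ℝ, 0 < b * Real.cosh t := fun t => mul_pos hb (Real.cosh_pos t)
  -- measurability of slices
  have hms : ∀ t : ℝ, AEStronglyMeasurable (fun y => F t y) μ := by
    intro t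
    refine (ContinuousOn.mul ?_ ?_).aestronglyMeasurable measurableSet_Ioi
    · exact fun y hy => (Complex.continuousAt_ofReal_cpow_const y (s-1)
        (Or.inr (ne_of_gt hy))).continuousWithinAt
    · exact (Complex.continuous_exp.comp
        (((continuous_const.mul Complex.continuous_ofReal)).neg)).continuousOn
  -- norm of F
  have hnorm : ∀ t : ℝ, ∀ y ∈ Ioi (0:ℝ),
      ‖F t y‖ = y ^ (σ - 1) * Real.exp (-(b * Real.cosh t * y)) := by
    intro t y hy
    rw [hF]
    simp only [norm_mul]
    rw [Complex.norm_cpow_eq_rpow_re_of_pos hy,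
      Complex.norm_exp]
    congr 2
    · simp
  -- real majorant integrable on slices
  have hreal : ∀ t : ℝ, IntegrableOn
      (fun y => y ^ (σ - 1) * Real.exp (-(b * Real.cosh t * y))) (Ioi 0) := by
    intro t
    have := integrableOn_rpow_mul_exp_neg_mul_rpow (by linarith : (-1:ℝ) < σ - 1)
      (by norm_num : (0:ℝ) < 1) (hr t)
    refine this.congr_fun (fun y hy => ?_) measurableSet_Ioi
    beta_reduce
    rw [Real.rpow_one, neg_mul]
  -- slice integrability
  have hslice : ∀ t : ℝ, Integrable (fun y => F t y) μ := by
    intro t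
    refine Integrable.mono' (hreal t) (hms t) ?_
    filter_upwards [ae_restrict_mem measurableSet_Ioi] with y hy
    rw [hnorm t y hy]
  -- joint measurability
  have hmF : AEStronglyMeasurable (Function.uncurry F) (μ.prod μ) := by
    rw [hμ, Measure.prod_restrict]
    refine ContinuousOn.aestronglyMeasurable ?_ (measurableSet_Ioi.prod measurableSet_Ioi)
    refine ContinuousOn.mul ?_ ?_
    · intro p hp
      exact ((Complex.continuousAt_ofReal_cpow_const p.2 (s-1)
        (Or.inr (ne_of_gt hp.2))).comp (continuous_snd.continuousAt)).continuousWithinAt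
    · refine Continuous.continuousOn ?_
      refine Complex.continuous_exp.comp (Continuous.neg (Continuous.mul ?_ ?_))
      · exact Complex.continuous_ofReal.comp (continuous_const.mul
          (Real.continuous_cosh.comp continuous_fst))
      · exact Complex.continuous_ofReal.comp continuous_snd
  -- value of norm integral
  have hnormint : ∀ t : ℝ, ∫ y, ‖F t y‖ ∂μ =
      (1/(b*Real.cosh t)) ^ σ * Real.Gamma σ := by
    intro t
    rw [hμ, ← Real.integral_rpow_mul_exp_neg_mul_Ioi hs (hr t)]
    exact setIntegral_congr_fun measurableSet_Ioi fun y hy => hnorm t y hy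
  -- integrability of the norm integral
  have hG : Integrable (fun t => ∫ y, ‖F t y‖ ∂μ) μ := by
    have hcont : Continuous (fun t => (1/(b*Real.cosh t)) ^ σ * Real.Gamma σ) := by
      refine Continuous.mul ?_ continuous_const
      refine continuous_iff_continuousAt.mpr fun t => ?_
      exact (Real.continuousAt_rpow_const _ _ (Or.inl (by positivity))).comp
        ((continuous_const.div (continuous_const.mul Real.continuous_cosh)
          (fun x => (hr x).ne')).continuousAt)
    have hbound : IntegrableOn
        (fun t => ((2/b) ^ σ * Real.Gamma σ) * Real.exp (-σ * t)) (Ioi 0) :=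
      ((exp_neg_integrableOn_Ioi 0 hs).const_mul _)
    refine Integrable.congr (Integrable.mono' hbound
      (hcont.aestronglyMeasurable.restrict) ?_) ?_
    · filter_upwards [ae_restrict_mem measurableSet_Ioi] with t ht
      rw [Real.norm_eq_abs, _root_.abs_of_nonneg (by positivity)]
      have h1 : 1/(b*Real.cosh t) ≤ (2/b) * Real.exp (-t) := by
        have hc2 : Real.exp t ≤ 2 * Real.cosh t := by
          rw [Real.cosh_eq]
          have := (Real.exp_pos (-t)).le
          linarith
        have he : Real.exp (-t) * Real.exp t = 1 := by rw [← Real.exp_add]; simp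
        have key := mul_le_mul_of_nonneg_left hc2
          (by positivity : (0:ℝ) ≤ b * Real.exp (-t))
        rw [show (2/b) * Real.exp (-t) = (2*Real.exp (-t))/b by ring,
          div_le_div_iff₀ (by positivity) hb, one_mul]
        nlinarith [key, he]
      have h2 : (1/(b*Real.cosh t)) ^ σ ≤ ((2/b) * Real.exp (-t)) ^ σ :=
        Real.rpow_le_rpow (by positivity) h1 (le_of_lt hs)
      have h3 : ((2/b) * Real.exp (-t)) ^ σ = (2/b) ^ σ * Real.exp (-σ * t) := by
        rw [Real.mul_rpow (by positivity) (Real.exp_pos _).le, ← Real.exp_mul]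
        ring_nf
      calc (1/(b*Real.cosh t)) ^ σ * Real.Gamma σ
          ≤ ((2/b) * Real.exp (-t)) ^ σ * Real.Gamma σ := by
            have := Real.Gamma_pos_of_pos hs
            exact mul_le_mul_of_nonneg_right h2 (le_of_lt this)
        _ = (2/b) ^ σ * Real.Gamma σ * Real.exp (-σ * t) := by rw [h3]; ring
    · filter_upwards [] with t
      exact (hnormint t).symm
  -- joint integrability
  have hint : Integrable (Function.uncurry F) (μ.prod μ) := by
    rw [MeasureTheory.integrable_prod_iff hmF]
    exact ⟨Filter.Eventually.of_forall hslice, hG⟩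
  -- the target function equals the marginal
  have hmarg : ∀ y : ℝ, (y:ℂ)^(s-1) * ((K0 (b*y) : ℝ):ℂ) = ∫ t, F t y ∂μ := by
    intro y
    have hco : ∫ t in Ioi (0:ℝ), ((Real.exp (-(b*y) * Real.cosh t) : ℝ):ℂ) =
        ((∫ t in Ioi (0:ℝ), Real.exp (-(b*y) * Real.cosh t) : ℝ):ℂ) :=
      _root_.integral_ofReal
    rw [K0, hμ, ← hco, ← MeasureTheory.integral_const_mul]
    refine setIntegral_congr_fun measurableSet_Ioi fun t ht => ?_
    rw [hF]
    congr 1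
    rw [Complex.ofReal_exp]
    congr 1
    push_cast
    ring
  constructor
  · have := hint.integral_prod_right
    refine (MeasureTheory.integrableOn_congr_fun (fun y _ => hmarg y) measurableSet_Ioi).mpr ?_
    exact this
  · calc ∫ y in Ioi (0:ℝ), (y:ℂ)^(s-1) * ((K0 (b*y) : ℝ):ℂ)
        = ∫ y, ∫ t, F t y ∂μ ∂μ := by
          rw [hμ]; exact setIntegral_congr_fun measurableSet_Ioi fun y _ => hmarg y
      _ = ∫ t, ∫ y, F t y ∂μ ∂μ := (MeasureTheory.integral_integral_swap hint).symm
      _ = ∫ t in Ioi (0:ℝ), (1/((b*Real.cosh t : ℝ):ℂ))^s * Complex.Gamma s := by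
          rw [hμ]
          refine setIntegral_congr_fun measurableSet_Ioi fun t _ => ?_
          exact Complex.integral_cpow_mul_exp_neg_mul_Ioi hs (hr t)
      _ = ∫ t in Ioi (0:ℝ), ((b:ℂ)^(-s) * Complex.Gamma s) * ((Real.cosh t:ℝ):ℂ)^(-s) := by
          refine setIntegral_congr_fun measurableSet_Ioi fun t _ => ?_
          have hargb : (b:ℂ).arg ≠ π := by
            rw [Complex.arg_ofReal_of_nonneg hb.le]; exact Real.pi_ne_zero.symm
          have hargc : ((Real.cosh t:ℝ):ℂ).arg ≠ π := by
            rw [Complex.arg_ofReal_of_nonneg (Real.cosh_pos t).le]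
            exact Real.pi_ne_zero.symm
          rw [Complex.ofReal_mul, one_div, mul_inv,
            ← Complex.ofReal_inv, ← Complex.ofReal_inv,
            Complex.mul_cpow_ofReal_nonneg (by positivity) (by positivity),
            Complex.ofReal_inv, Complex.ofReal_inv,
            Complex.inv_cpow _ _ hargb, Complex.inv_cpow _ _ hargc,
            ← Complex.cpow_neg, ← Complex.cpow_neg]
          ring
      _ = ((b:ℂ)^(-s) * Complex.Gamma s) * ((2:ℂ)^(s-2) * Complex.betaIntegral (s/2) (s/2)) := by
          rw [MeasureTheory.integral_const_mul, cosh_int hs]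
      _ = 2 ^ (s - 2) * (b : ℂ) ^ (-s) * Complex.Gamma (s / 2) ^ 2 := by
          have hbeta := Complex.Gamma_mul_Gamma_eq_betaIntegral (re_half hs) (re_half hs)
          rw [show s/2 + s/2 = s by ring] at hbeta
          rw [sq]
          linear_combination (-(2:ℂ) ^ (s - 2) * (b:ℂ) ^ (-s)) * hbeta
end
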